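/- If P is a (K1, F1, Z1, S1) CPDA for a multiaccess combination network with H relays, r relays per user, and u users per r-subset (K1 = u·C(H,r)), and A is a (K2, F2, Z2, S2) PDA, then the product array L (defined entrywise by L_{(j1,j2),(k1,k2)} = a_{j2,k2} + (p_{j1,k1}-1)·S2 if both entries are integers, * otherwise) is a (u·K2·C(H,r), F1·F2, Z1·F2 + (F1-Z1)·Z2, S1·S2) CPDA, where column ((T,i),k2) of L is connected to relay set T. Moreover, for every integer s ∈ [S1·S2], the relay intersection set I_s for L equals the relay intersection set I_{s1} for P, where s1 = (s - <s>_{S2})/S2 + 1. -/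
import Mathlib


open scoped Classical

/-- A `(K, F, Z, S)` placement delivery array (stars encoded as `none`). -/
def IsPDA {ι κ : Type*} [Fintype ι] [Fintype κ] (Z S : ℕ) (P : ι → κ → Option ℕ) : Prop :=
  (∀ j k s, P j k = some s → 1 ≤ s ∧ s ≤ S) ∧
  (∀ k, (Finset.univ.filter (fun j => P j k = none)).card = Z) ∧
  (∀ s, 1 ≤ s → s ≤ S → ∃ j k, P j k = some s) ∧
  (∀ j₁ k₁ j₂ k₂ s, P j₁ k₁ = some s → P j₂ k₂ = some s → (j₁, k₁) ≠ (j₂, k₂) →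
    j₁ ≠ j₂ ∧ k₁ ≠ k₂ ∧ P j₁ k₂ = none ∧ P j₂ k₁ = none)

/-- `I_s`: the intersection of the relay sets `lab k` over all columns `k` in whose
column the integer `s` appears. -/
def Iset {ι κ : Type*} [Fintype ι] [Fintype κ] {H : ℕ} (P : ι → κ → Option ℕ)
    (lab : κ → Finset (Fin H)) (s : ℕ) : Finset (Fin H) :=
  Finset.univ.filter (fun h => ∀ j k, P j k = some s → h ∈ lab k)

/-- A combinatorial PDA: a PDA whose columns carry relay sets `lab k`, such that for every
integer `s ∈ [S]` the intersection `I_s` is nonempty. -/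
def IsCPDA {ι κ : Type*} [Fintype ι] [Fintype κ] {H : ℕ} (Z S : ℕ)
    (P : ι → κ → Option ℕ) (lab : κ → Finset (Fin H)) : Prop :=
  IsPDA Z S P ∧ ∀ s, 1 ≤ s → s ≤ S → (Iset P lab s).Nonempty

/-- The product array. -/
def prodPDA {ι₁ κ₁ ι₂ κ₂ : Type*} (S₂ : ℕ)
    (P : ι₁ → κ₁ → Option ℕ) (A : ι₂ → κ₂ → Option ℕ) :
    ι₁ × ι₂ → κ₁ × κ₂ → Option ℕ :=
  fun j k =>
    match P j.1 k.1, A j.2 k.2 with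
    | some s₁, some s₂ => some (s₂ + (s₁ - 1) * S₂)
    | _, _ => none

/-- `<s>_q`: `s mod q` if this is nonzero, and `q` otherwise. -/
def modRep (s q : ℕ) : ℕ := if s % q ≠ 0 then s % q else q

lemma prodPDA_eq_some_iff {ι₁ κ₁ ι₂ κ₂ : Type*} (S₂ : ℕ)
    (P : ι₁ → κ₁ → Option ℕ) (A : ι₂ → κ₂ → Option ℕ) (j : ι₁ × ι₂) (k : κ₁ × κ₂) (s : ℕ) :
    prodPDA S₂ P A j k = some s ↔
      ∃ s₁ s₂, P j.1 k.1 = some s₁ ∧ A j.2 k.2 = some s₂ ∧ s = s₂ + (s₁ - 1) * S₂ := by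
  unfold prodPDA
  cases h1 : P j.1 k.1 <;> cases h2 : A j.2 k.2 <;> simp_all [eq_comm]

lemma prodPDA_eq_none_iff {ι₁ κ₁ ι₂ κ₂ : Type*} (S₂ : ℕ)
    (P : ι₁ → κ₁ → Option ℕ) (A : ι₂ → κ₂ → Option ℕ) (j : ι₁ × ι₂) (k : κ₁ × κ₂) :
    prodPDA S₂ P A j k = none ↔ P j.1 k.1 = none ∨ A j.2 k.2 = none := by
  unfold prodPDA
  cases h1 : P j.1 k.1 <;> cases h2 : A j.2 k.2 <;> simp

lemma decode_eq {S₂ s₁ s₂ : ℕ} (h1 : 1 ≤ s₂) (h2 : s₂ ≤ S₂) (h3 : 1 ≤ s₁) :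
    modRep (s₂ + (s₁ - 1) * S₂) S₂ = s₂ ∧
    ((s₂ + (s₁ - 1) * S₂) - modRep (s₂ + (s₁ - 1) * S₂) S₂) / S₂ + 1 = s₁ := by
  have hS : 0 < S₂ := lt_of_lt_of_le h1 h2
  have hm : (s₂ + (s₁ - 1) * S₂) % S₂ = s₂ % S₂ := Nat.add_mul_mod_self_right _ _ _
  have hrep : modRep (s₂ + (s₁ - 1) * S₂) S₂ = s₂ := by
    unfold modRep
    rw [hm]
    rcases eq_or_lt_of_le h2 with h | h
    · subst h; simp
    · rw [Nat.mod_eq_of_lt h, if_pos (show s₂ ≠ 0 by omega)]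
  refine ⟨hrep, ?_⟩
  rw [hrep, Nat.add_sub_cancel_left, Nat.mul_div_cancel _ hS]
  omega

lemma exists_decomp {S₁ S₂ s : ℕ} (h1 : 1 ≤ s) (h2 : s ≤ S₁ * S₂) :
    ∃ s₁ s₂, 1 ≤ s₁ ∧ s₁ ≤ S₁ ∧ 1 ≤ s₂ ∧ s₂ ≤ S₂ ∧ s = s₂ + (s₁ - 1) * S₂ := by
  have hS₂ : 0 < S₂ := by
    rcases Nat.eq_zero_or_pos S₂ with h | h
    · subst h; simp at h2; omega
    · exact h
  have hlt : (s - 1) / S₂ < S₁ := by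
    apply Nat.div_lt_of_lt_mul
    rw [Nat.mul_comm]
    omega
  have hmlt : (s - 1) % S₂ < S₂ := Nat.mod_lt _ hS₂
  have heq : (s - 1) % S₂ + (s - 1) / S₂ * S₂ = s - 1 := Nat.mod_add_div' (s - 1) S₂
  obtain ⟨q, hq⟩ : ∃ q, (s - 1) / S₂ = q := ⟨_, rfl⟩
  obtain ⟨m, hm⟩ : ∃ m, (s - 1) % S₂ = m := ⟨_, rfl⟩
  rw [hq] at hlt heq
  rw [hm] at hmlt heq
  refine ⟨q + 1, m + 1, by omega, by omega, by omega, by omega, ?_⟩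
  have h3 : q + 1 - 1 = q := by omega
  rw [h3]
  omega

/-- If `P` is a `(u·C(H,r), F1, Z1, S1)` CPDA (columns labeled `(T,i)` with `T` an
`r`-subset of `[H]`, `i ∈ [u]`, and relay set `T`) and `A` is a `(K2,F2,Z2,S2)` PDA,
then the product array `L` is a `(u·K2·C(H,r), F1·F2, Z1·F2+(F1-Z1)·Z2, S1·S2)` CPDA,
where column `((T,i),k2)` gets relay set `T`; moreover for every `s ∈ [S1·S2]`,
`I_s` of `L` equals `I_{s1}` of `P` with `s1 = (s - <s>_{S2})/S2 + 1`. -/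
theorem stmt6 {H r u F₁ F₂ K₂ Z₁ S₁ Z₂ S₂ : ℕ} (hr : 0 < r) (hrH : r < H) (hu : 0 < u)
    (P : Fin F₁ → ({T : Finset (Fin H) // T.card = r} × Fin u) → Option ℕ)
    (A : Fin F₂ → Fin K₂ → Option ℕ)
    (hP : IsCPDA Z₁ S₁ P (fun k => k.1.1)) (hA : IsPDA Z₂ S₂ A) :
    Fintype.card (({T : Finset (Fin H) // T.card = r} × Fin u) × Fin K₂)
        = u * K₂ * Nat.choose H r
    ∧ IsCPDA (Z₁ * F₂ + (F₁ - Z₁) * Z₂) (S₁ * S₂) (prodPDA S₂ P A)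
        (fun k => k.1.1.1)
    ∧ ∀ s, 1 ≤ s → s ≤ S₁ * S₂ →
        Iset (prodPDA S₂ P A) (fun k => k.1.1.1) s
          = Iset P (fun k => k.1.1) ((s - modRep s S₂) / S₂ + 1) := by
  obtain ⟨⟨hP1, hP2, hP3, hP4⟩, hPI⟩ := hP
  obtain ⟨hA1, hA2, hA3, hA4⟩ := hA
  -- a column of P exists
  obtain ⟨T, -, hT⟩ := Finset.exists_subset_card_eq (s := (Finset.univ : Finset (Fin H))) (n := r)
    (by simpa using hrH.le)
  have k0 : {T : Finset (Fin H) // T.card = r} × Fin u := (⟨T, hT⟩, ⟨0, hu⟩)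
  have hZ₁F₁ : Z₁ ≤ F₁ := by
    have h := hP2 k0
    calc Z₁ = _ := h.symm
    _ ≤ (Finset.univ : Finset (Fin F₁)).card := Finset.card_filter_le _ _
    _ = F₁ := by simp
  -- the Iset equality
  have hIs : ∀ s, 1 ≤ s → s ≤ S₁ * S₂ →
      Iset (prodPDA S₂ P A) (fun k => k.1.1.1) s
        = Iset P (fun k => k.1.1) ((s - modRep s S₂) / S₂ + 1) := by
    intro s hs1 hs2
    obtain ⟨s₁, s₂, ha, hb, hc, hd, he⟩ := exists_decomp hs1 hs2
    obtain ⟨hm, hq⟩ := decode_eq hc hd ha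
    rw [he, hq]
    ext x
    simp only [Iset, Finset.mem_filter, Finset.mem_univ, true_and]
    constructor
    · intro hh j₁ k₁ hjk
      obtain ⟨j₂, k₂, hjk2⟩ := hA3 s₂ hc hd
      exact hh (j₁, j₂) (k₁, k₂)
        ((prodPDA_eq_some_iff S₂ P A _ _ _).2 ⟨s₁, s₂, hjk, hjk2, rfl⟩)
    · intro hh j k hjk
      obtain ⟨t₁, t₂, h1, h2, h3⟩ := (prodPDA_eq_some_iff S₂ P A _ _ _).1 hjk
      obtain ⟨hb1, hb2⟩ := hP1 _ _ _ h1
      obtain ⟨hb3, hb4⟩ := hA1 _ _ _ h2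
      obtain ⟨hm', hq'⟩ := decode_eq hb3 hb4 hb1
      rw [← h3] at hq'
      have ht : t₁ = s₁ := by rw [← hq, ← hq']
      exact hh j.1 k.1 (ht ▸ h1)
  -- bounds on the decoded s₁ for s in range
  have hdec : ∀ s, 1 ≤ s → s ≤ S₁ * S₂ →
      1 ≤ (s - modRep s S₂) / S₂ + 1 ∧ (s - modRep s S₂) / S₂ + 1 ≤ S₁ := by
    intro s hs1 hs2
    obtain ⟨s₁, s₂, ha, hb, hc, hd, he⟩ := exists_decomp hs1 hs2
    obtain ⟨hm, hq⟩ := decode_eq hc hd ha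
    rw [he, hq]
    exact ⟨ha, hb⟩
  refine ⟨?_, ⟨⟨?_, ?_, ?_, ?_⟩, ?_⟩, hIs⟩
  · -- cardinality
    rw [Fintype.card_prod, Fintype.card_prod, Fintype.card_fin, Fintype.card_fin,
      Fintype.card_finset_len, Fintype.card_fin]
    ring
  · -- range of entries
    intro j k s hs
    obtain ⟨s₁, s₂, h1, h2, h3⟩ := (prodPDA_eq_some_iff S₂ P A _ _ _).1 hs
    obtain ⟨hb1, hb2⟩ := hP1 _ _ _ h1
    obtain ⟨hb3, hb4⟩ := hA1 _ _ _ h2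
    subst h3
    constructor
    · omega
    · have h5 : (s₁ - 1) * S₂ ≤ (S₁ - 1) * S₂ := Nat.mul_le_mul_right _ (by omega)
      have h7 : (S₁ - 1) * S₂ = S₁ * S₂ - S₂ := by rw [Nat.sub_mul, one_mul]
      have h8 : S₂ ≤ S₁ * S₂ := Nat.le_mul_of_pos_left _ (by omega)
      omega
  · -- star count in each column
    intro k
    have hset : (Finset.univ.filter (fun j : Fin F₁ × Fin F₂ => prodPDA S₂ P A j k = none))
        = ((Finset.univ.filter (fun j₁ => P j₁ k.1 = none)) ×ˢ (Finset.univ : Finset (Fin F₂)))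
          ∪ ((Finset.univ.filter (fun j₁ => ¬ P j₁ k.1 = none))
              ×ˢ (Finset.univ.filter (fun j₂ => A j₂ k.2 = none))) := by
      ext ⟨j₁, j₂⟩
      simp only [Finset.mem_filter, Finset.mem_univ, true_and, Finset.mem_union,
        Finset.mem_product, prodPDA_eq_none_iff]
      tauto
    rw [hset, Finset.card_union_of_disjoint, Finset.card_product, Finset.card_product]
    · have h1 := hP2 k.1
      have h2 := hA2 k.2
      have h3 : (Finset.univ.filter (fun j₁ => P j₁ k.1 = none)).card
          + (Finset.univ.filter (fun j₁ => ¬ P j₁ k.1 = none)).card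
          = (Finset.univ : Finset (Fin F₁)).card :=
        Finset.card_filter_add_card_filter_not _
      simp only [Finset.card_univ, Fintype.card_fin] at h3 ⊢
      rw [h1, h2]
      have : (Finset.univ.filter (fun j₁ => ¬ P j₁ k.1 = none)).card = F₁ - Z₁ := by omega
      rw [this]
    · rw [Finset.disjoint_left]
      rintro ⟨j₁, j₂⟩ hmem hmem'
      simp only [Finset.mem_product, Finset.mem_filter, Finset.mem_univ, true_and] at hmem hmem'
      exact hmem'.1 hmem.1
  · -- surjectivity
    intro s hs1 hs2
    obtain ⟨s₁, s₂, ha, hb, hc, hd, he⟩ := exists_decomp hs1 hs2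
    obtain ⟨j₁, k₁, h1⟩ := hP3 s₁ ha hb
    obtain ⟨j₂, k₂, h2⟩ := hA3 s₂ hc hd
    exact ⟨(j₁, j₂), (k₁, k₂), (prodPDA_eq_some_iff S₂ P A _ _ _).2 ⟨s₁, s₂, h1, h2, he⟩⟩
  · -- the C3 condition
    intro j₁ k₁ j₂ k₂ s hs1 hs2 hne
    obtain ⟨a₁, a₂, ha1, ha2, ha3⟩ := (prodPDA_eq_some_iff S₂ P A _ _ _).1 hs1
    obtain ⟨b₁, b₂, hb1, hb2, hb3⟩ := (prodPDA_eq_some_iff S₂ P A _ _ _).1 hs2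
    obtain ⟨hra1, hra2⟩ := hP1 _ _ _ ha1
    obtain ⟨hra3, hra4⟩ := hA1 _ _ _ ha2
    obtain ⟨hrb1, hrb2⟩ := hP1 _ _ _ hb1
    obtain ⟨hrb3, hrb4⟩ := hA1 _ _ _ hb2
    obtain ⟨hma, hqa⟩ := decode_eq hra3 hra4 hra1
    obtain ⟨hmb, hqb⟩ := decode_eq hrb3 hrb4 hrb1
    rw [← ha3] at hma hqa
    rw [← hb3] at hmb hqb
    have heq1 : a₁ = b₁ := by rw [← hqa, ← hqb]
    have heq2 : a₂ = b₂ := by rw [← hma, ← hmb]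
    subst heq1; subst heq2
    by_cases hcase : (j₁.1, k₁.1) = (j₂.1, k₂.1)
    · rw [Prod.mk.injEq] at hcase
      obtain ⟨hj, hk⟩ := hcase
      have hne2 : (j₁.2, k₁.2) ≠ (j₂.2, k₂.2) := by
        intro h
        rw [Prod.mk.injEq] at h
        apply hne
        rw [Prod.ext_iff, Prod.ext_iff, Prod.ext_iff]
        exact ⟨⟨hj, h.1⟩, hk, h.2⟩
      obtain ⟨hd1, hd2, hd3, hd4⟩ := hA4 _ _ _ _ _ ha2 hb2 hne2
      refine ⟨fun h => hd1 (by rw [h]), fun h => hd2 (by rw [h]), ?_, ?_⟩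
      · rw [prodPDA_eq_none_iff]; right; exact hd3
      · rw [prodPDA_eq_none_iff]; right; exact hd4
    · obtain ⟨hd1, hd2, hd3, hd4⟩ := hP4 _ _ _ _ _ ha1 hb1 hcase
      refine ⟨fun h => hd1 (by rw [h]), fun h => hd2 (by rw [h]), ?_, ?_⟩
      · rw [prodPDA_eq_none_iff]; left; exact hd3
      · rw [prodPDA_eq_none_iff]; left; exact hd4
  · -- nonemptiness of the intersections
    intro s hs1 hs2
    rw [hIs s hs1 hs2]
    obtain ⟨h1, h2⟩ := hdec s hs1 hs2
    exact hPI _ h1 h2
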